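/- Let (β,δ) lie in the exponential regime ℰ and let 0 < α < β + δ. Then, as N → ∞, the expected occupation time of the time-rescaled best-class process in the set {1,…,⌊N^α⌋} before extinction, started from ⌊N^α⌋ and given by the Green-function sum Σ_{n=1}^{⌊N^α⌋} G_N(n,n), satisfies ( Σ_{n=1}^{⌊N^α⌋} G_N(n,n) ) / ( 2 N^{α−β} ) → 1. -/

import Mathlib

open Filter Finset Real

set_option maxHeartbeats 1000000

namespace MullerRatchet3

/-- Per-capita upward rate of the time-rescaled best-class process:
`p_n = (1/(2m) + 1/ρ)(1 − n/N)` with `m = N^{−β}`, `ρ = 1 − N^{−δ}`. -/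
noncomputable def pr (β δ : ℝ) (N n : ℕ) : ℝ :=
  (1 / (2 * (N:ℝ)^(-β)) + 1 / (1 - (N:ℝ)^(-δ))) * (1 - (n:ℝ)/(N:ℝ))

/-- Per-capita downward rate `q_n = (1/(2m))(1 − n/N) + 1` with `m = N^{−β}`. -/
noncomputable def qr (β : ℝ) (N n : ℕ) : ℝ :=
  (1 / (2 * (N:ℝ)^(-β))) * (1 - (n:ℝ)/(N:ℝ)) + 1

/-- Green function `G_N(n₀,n) = (1/(n q_n)) Σ_{l=0}^{min(n₀,n)−1} ∏_{k=l+1}^{n−1} p_k/q_k`. -/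
noncomputable def G (β δ : ℝ) (N n₀ n : ℕ) : ℝ :=
  (1 / ((n:ℝ) * qr β N n)) * ∑ l ∈ Finset.range (min n₀ n),
    ∏ k ∈ Finset.Icc (l+1) (n-1), pr β δ N k / qr β N k

/-- The key eventual two-sided bound. -/
lemma key (β δ α : ℝ) (hβ0 : 0 < β) (hδ0 : 0 < δ) (hα0 : 0 < α) (hαd : α < 1 - δ)
    (N : ℕ) (hN : 2 ≤ N) (he : (N:ℝ)^(-δ) ≤ 1/2) (hx : (N:ℝ)^(α-1) ≤ 1/2) :
    ((⌊(N:ℝ)^α⌋₊:ℝ)/(N:ℝ)^α) / (1 + 2*(N:ℝ)^(-β)) ≤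
      (∑ n ∈ Finset.Icc 1 ⌊(N:ℝ)^α⌋₊, G β δ N n n) / (2 * (N:ℝ)^(α - β)) ∧
    (∑ n ∈ Finset.Icc 1 ⌊(N:ℝ)^α⌋₊, G β δ N n n) / (2 * (N:ℝ)^(α - β)) ≤
      ((⌊(N:ℝ)^α⌋₊:ℝ)/(N:ℝ)^α) * (1 + 8*(N:ℝ)^(-β-δ))^(⌊(N:ℝ)^α⌋₊) / (1 - (N:ℝ)^(α-1)) := by
  set a : ℝ := (N:ℝ) with ha_def
  have ha2 : (2:ℝ) ≤ a := by rw [ha_def]; exact_mod_cast hN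
  have ha0 : 0 < a := by linarith
  have ha1 : 1 ≤ a := by linarith
  set M : ℕ := ⌊a^α⌋₊ with hM_def
  have hMa : (M:ℝ) ≤ a^α := Nat.floor_le (rpow_nonneg ha0.le α)
  set b : ℝ := a^β with hb_def
  have hb : 0 < b := rpow_pos_of_pos ha0 β
  have hbinv : a^(-β) = b⁻¹ := by rw [hb_def, Real.rpow_neg ha0.le]
  set e : ℝ := a^(-δ) with he_def
  have he0 : 0 < e := rpow_pos_of_pos ha0 _
  set ρ : ℝ := 1 - e with hρ_def
  have hρh : 1/2 ≤ ρ := by rw [hρ_def]; linarith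
  have hρ0 : 0 < ρ := by linarith
  have hρ1 : ρ ≤ 1 := by rw [hρ_def]; linarith
  set r : ℝ := 1/ρ with hr_def
  have hrρ : r * ρ = 1 := one_div_mul_cancel hρ0.ne'
  have hr1 : 1 ≤ r := by rw [hr_def]; rw [le_div_iff₀ hρ0]; linarith
  have hr2 : r ≤ 2 := by rw [hr_def]; rw [div_le_iff₀ hρ0]; linarith
  set x : ℝ := a^(α-1) with hx_def
  have hx0 : 0 < x := rpow_pos_of_pos ha0 _
  -- a^α ≤ a * e
  have haα_le : a^α ≤ a * e := by
    have h1 : a^α ≤ a^(1-δ) := rpow_le_rpow_of_exponent_le ha1 (by linarith)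
    have h2 : a^(1-δ) = a * e := by
      rw [he_def, show (1:ℝ) - δ = 1 + (-δ) by ring, Real.rpow_add ha0, Real.rpow_one]
    linarith
  have hax : a^α = a * x := by
    rw [hx_def, show α - 1 = α + (-1) by ring, Real.rpow_add ha0, Real.rpow_neg_one]
    field_simp
  -- bounds for 1 - k/a, for k ≤ M
  have hu : ∀ k : ℕ, k ≤ M → (k:ℝ)/a ≤ e ∧ (k:ℝ)/a ≤ x := by
    intro k hk
    have hkR : (k:ℝ) ≤ a^α := le_trans (by exact_mod_cast hk) hMa
    constructor
    · rw [div_le_iff₀ ha0]; calc (k:ℝ) ≤ a^α := hkR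
        _ ≤ a * e := haα_le
        _ = e * a := by ring
    · rw [div_le_iff₀ ha0]; calc (k:ℝ) ≤ a^α := hkR
        _ = a * x := hax
        _ = x * a := by ring
  -- rewrite of qr and pr
  have hq_eq : ∀ k : ℕ, qr β N k = b/2 * (1 - (k:ℝ)/a) + 1 := by
    intro k; rw [qr, hbinv]; rw [one_div, mul_inv, inv_inv]; ring
  have hp_eq : ∀ k : ℕ, pr β δ N k = (b/2 + r) * (1 - (k:ℝ)/a) := by
    intro k; rw [pr, hbinv, ← he_def, ← hρ_def, ← hr_def]
    rw [one_div (2 * b⁻¹), mul_inv, inv_inv]; ring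
  set c : ℝ := 8 * a^(-β-δ) with hc_def
  have hc_eq : c = 8 * b⁻¹ * e := by
    rw [hc_def, show -β-δ = (-β) + (-δ) by ring, Real.rpow_add ha0, hbinv, he_def]; ring
  have hc0 : 0 ≤ c := by rw [hc_eq]; positivity
  -- per-k ratio bounds
  have hq_pos : ∀ k : ℕ, k ≤ M → 0 < qr β N k := by
    intro k hk
    have h := (hu k hk).1
    rw [hq_eq]
    nlinarith [hb, he0]
  have hq_ge : ∀ k : ℕ, k ≤ M → b/2 * (1 - x) ≤ qr β N k := by
    intro k hk
    have h := (hu k hk).2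
    rw [hq_eq]
    nlinarith [hb]
  have hq_quarter : ∀ k : ℕ, k ≤ M → b/4 ≤ qr β N k := by
    intro k hk
    have := hq_ge k hk
    nlinarith [hb]
  have hq_le : ∀ k : ℕ, qr β N k ≤ b/2 + 1 := by
    intro k
    rw [hq_eq]
    have : (0:ℝ) ≤ (k:ℝ)/a := by positivity
    nlinarith [hb]
  have hratio_ge : ∀ k : ℕ, k ≤ M → 1 ≤ pr β δ N k / qr β N k := by
    intro k hk
    rw [le_div_iff₀ (hq_pos k hk), hp_eq, hq_eq, one_mul]
    have h1 := (hu k hk).1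
    have h2 : (0:ℝ) ≤ (k:ℝ)/a := by positivity
    -- p - q = r*u - 1 where u = 1 - k/a ≥ ρ, so r*u ≥ r*ρ = 1
    nlinarith [hrρ, hr1, hb]
  have hratio_le : ∀ k : ℕ, k ≤ M → pr β δ N k / qr β N k ≤ 1 + c := by
    intro k hk
    rw [div_le_iff₀ (hq_pos k hk), hp_eq, hq_eq, hc_eq]
    have h1 := (hu k hk).1
    have h2 : (0:ℝ) ≤ (k:ℝ)/a := by positivity
    have hbinv0 : 0 < b⁻¹ := by positivity
    have hbb : b⁻¹ * b = 1 := inv_mul_cancel₀ hb.ne'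
    set u : ℝ := 1 - (k:ℝ)/a with hu_def
    clear_value u
    have hu1 : u ≤ 1 := by rw [hu_def]; linarith
    have huh : 1/2 ≤ u := by rw [hu_def]; linarith
    have h3 : r * u - 1 ≤ 2*e := by nlinarith [hrρ, hr2, hr1, he0]
    have h4 : 2*e ≤ 4*e*u := by
      have h := mul_le_mul_of_nonneg_left huh (by positivity : (0:ℝ) ≤ 4*e)
      linarith
    have h5 : 8*b⁻¹*e*(b/2*u) = 4*e*u := by
      field_simp
      ring
    nlinarith [h3, h4, h5, mul_nonneg (mul_nonneg hbinv0.le he0.le) (by norm_num : (0:ℝ) ≤ 8)]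
  -- per-n bound on G n n
  have hG : ∀ n : ℕ, 1 ≤ n → n ≤ M →
      1/(b/2+1) ≤ G β δ N n n ∧ G β δ N n n ≤ (1+c)^M / (b/2 * (1-x)) := by
    intro n h1n hnM
    have hn0 : (0:ℝ) < (n:ℝ) := by exact_mod_cast h1n
    have hprod : ∀ l ∈ Finset.range n,
        1 ≤ ∏ k ∈ Finset.Icc (l+1) (n-1), pr β δ N k / qr β N k ∧
        ∏ k ∈ Finset.Icc (l+1) (n-1), pr β δ N k / qr β N k ≤ (1+c)^M := by
      intro l hl
      have hmem : ∀ k ∈ Finset.Icc (l+1) (n-1), k ≤ M := by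
        intro k hk
        rw [Finset.mem_Icc] at hk
        omega
      constructor
      · have h := Finset.prod_le_prod (s := Finset.Icc (l+1) (n-1))
          (f := fun _ => (1:ℝ)) (g := fun k => pr β δ N k / qr β N k)
          (fun k _ => zero_le_one) (fun k hk => hratio_ge k (hmem k hk))
        simpa using h
      · calc ∏ k ∈ Finset.Icc (l+1) (n-1), pr β δ N k / qr β N k
            ≤ ∏ k ∈ Finset.Icc (l+1) (n-1), (1+c) := by
              apply Finset.prod_le_prod
              · intro k hk; linarith [hratio_ge k (hmem k hk)]
              · intro k hk; exact hratio_le k (hmem k hk)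
          _ = (1+c)^(Finset.Icc (l+1) (n-1)).card := Finset.prod_const _
          _ ≤ (1+c)^M := by
              apply pow_le_pow_right₀ (by linarith)
              rw [Nat.card_Icc]; omega
    have hS_ge : (n:ℝ) ≤ ∑ l ∈ Finset.range n,
        ∏ k ∈ Finset.Icc (l+1) (n-1), pr β δ N k / qr β N k := by
      calc (n:ℝ) = ∑ _l ∈ Finset.range n, (1:ℝ) := by simp
        _ ≤ _ := Finset.sum_le_sum (fun l hl => (hprod l hl).1)
    have hS_le : ∑ l ∈ Finset.range n,
        (∏ k ∈ Finset.Icc (l+1) (n-1), pr β δ N k / qr β N k) ≤ (n:ℝ) * (1+c)^M := by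
      calc _ ≤ ∑ _l ∈ Finset.range n, (1+c)^M := Finset.sum_le_sum (fun l hl => (hprod l hl).2)
        _ = (n:ℝ) * (1+c)^M := by simp [mul_comm]
    have hqn_pos := hq_pos n hnM
    have hGe : G β δ N n n = (1 / ((n:ℝ) * qr β N n)) * ∑ l ∈ Finset.range n,
        ∏ k ∈ Finset.Icc (l+1) (n-1), pr β δ N k / qr β N k := by
      rw [G, min_self]
    have hnq_pos : 0 < (n:ℝ) * qr β N n := mul_pos hn0 hqn_pos
    constructor
    · rw [hGe]
      have hnne : (n:ℝ) ≠ 0 := hn0.ne'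
      have h1 : 1/(b/2+1) = (1/((n:ℝ)*(b/2+1))) * (n:ℝ) := by
        field_simp
      rw [h1]
      apply mul_le_mul
      · apply one_div_le_one_div_of_le hnq_pos
        exact mul_le_mul_of_nonneg_left (hq_le n) hn0.le
      · exact hS_ge
      · exact hn0.le
      · positivity
    · rw [hGe]
      have hlow_pos : 0 < b/2 * (1-x) := by nlinarith [hb]
      have hnne : (n:ℝ) ≠ 0 := hn0.ne'
      have hlne : b/2 * (1-x) ≠ 0 := hlow_pos.ne'
      have h1 : (1+c)^M / (b/2 * (1-x)) = (1/((n:ℝ)*(b/2*(1-x)))) * ((n:ℝ) * (1+c)^M) := by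
        rw [one_div, mul_inv, mul_comm ((n:ℝ)⁻¹) _, mul_assoc, ← mul_assoc ((n:ℝ)⁻¹) _ _,
          inv_mul_cancel₀ hnne, one_mul, div_eq_inv_mul]
      rw [h1]
      apply mul_le_mul
      · apply one_div_le_one_div_of_le (by positivity)
        exact mul_le_mul_of_nonneg_left (hq_ge n hnM) hn0.le
      · exact hS_le
      · exact le_trans (by positivity) (le_trans hS_ge (le_refl _))
      · positivity
  -- sum the per-n bounds
  have hcard : (Finset.Icc 1 M).card = M := by rw [Nat.card_Icc]; omega
  have hsum_ge : (M:ℝ) * (1/(b/2+1)) ≤ ∑ n ∈ Finset.Icc 1 M, G β δ N n n := by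
    calc (M:ℝ) * (1/(b/2+1)) = ∑ _n ∈ Finset.Icc 1 M, (1/(b/2+1)) := by
          rw [Finset.sum_const, hcard, nsmul_eq_mul]
      _ ≤ _ := Finset.sum_le_sum (fun n hn => by
          rw [Finset.mem_Icc] at hn
          exact (hG n hn.1 hn.2).1)
  have hsum_le : ∑ n ∈ Finset.Icc 1 M, G β δ N n n ≤ (M:ℝ) * ((1+c)^M / (b/2*(1-x))) := by
    calc ∑ n ∈ Finset.Icc 1 M, G β δ N n n
        ≤ ∑ _n ∈ Finset.Icc 1 M, ((1+c)^M / (b/2*(1-x))) := Finset.sum_le_sum (fun n hn => by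
          rw [Finset.mem_Icc] at hn
          exact (hG n hn.1 hn.2).2)
      _ = (M:ℝ) * ((1+c)^M / (b/2*(1-x))) := by rw [Finset.sum_const, hcard, nsmul_eq_mul]
  set y : ℝ := a^(α-β) with hy_def
  have hy : 0 < y := rpow_pos_of_pos ha0 _
  have haα : a^α = b * y := by
    rw [hb_def, hy_def, ← Real.rpow_add ha0]
    norm_num
  have hD : (0:ℝ) < 2 * y := by linarith
  clear_value y b c x e M
  have hone_x : 0 < 1 - x := by linarith
  constructor
  · have heq : ((M:ℝ)/a^α) / (1 + 2*a^(-β)) = ((M:ℝ) * (1/(b/2+1))) / (2*y) := by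
      rw [hbinv, haα]
      have h1 : (1:ℝ) + 2*b⁻¹ ≠ 0 := by positivity
      have h2 : b/2 + 1 ≠ 0 := by positivity
      field_simp
    rw [heq]
    exact div_le_div_of_nonneg_right hsum_ge hD.le
  · have heq : ((M:ℝ)/a^α) * (1+c)^M / (1 - x) = ((M:ℝ) * ((1+c)^M / (b/2*(1-x)))) / (2*y) := by
      rw [haα]
      field_simp
    rw [heq]
    exact div_le_div_of_nonneg_right hsum_le hD.le

/-- In the exponential regime `ℰ`, for `0 < α < β + δ`,
`Σ_{n=1}^{⌊N^α⌋} G_N(n,n) ∼ 2 N^{α−β}` as `N → ∞`. -/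
theorem statement3 (β δ α : ℝ)
    (hβ0 : 0 < β) (hβ1 : β < 1)
    (hδ0 : 0 < δ) (hδ1 : δ < (1 - β)/2)
    (hα0 : 0 < α) (hα1 : α < β + δ) :
    Tendsto (fun N : ℕ =>
        (∑ n ∈ Finset.Icc 1 ⌊(N:ℝ)^α⌋₊, G β δ N n n) / (2 * (N:ℝ)^(α - β)))
      atTop (nhds 1) := by
  have hαd : α < 1 - δ := by linarith
  have hα_lt1 : α < 1 := by linarith
  -- basic limit ingredients
  have hnatTop : Tendsto (fun N : ℕ => (N:ℝ)) atTop atTop := tendsto_natCast_atTop_atTop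
  have hfloor : Tendsto (fun N:ℕ => (⌊(N:ℝ)^α⌋₊:ℝ)/(N:ℝ)^α) atTop (nhds 1) :=
    tendsto_nat_floor_div_atTop.comp ((tendsto_rpow_atTop hα0).comp hnatTop)
  have hneg : ∀ c : ℝ, 0 < c → Tendsto (fun N:ℕ => (N:ℝ)^(-c)) atTop (nhds 0) := by
    intro c hc
    exact (tendsto_rpow_neg_atTop hc).comp hnatTop
  -- limit of lower bound
  have hden1 : Tendsto (fun N:ℕ => 1 + 2*(N:ℝ)^(-β)) atTop (nhds 1) := by
    have := tendsto_const_nhds (x := (1:ℝ)) (f := atTop (α := ℕ)) |>.add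
      ((hneg β hβ0).const_mul 2)
    simpa using this
  have limL : Tendsto (fun N:ℕ => ((⌊(N:ℝ)^α⌋₊:ℝ)/(N:ℝ)^α) / (1 + 2*(N:ℝ)^(-β)))
      atTop (nhds 1) := by
    have := hfloor.div hden1 (by norm_num)
    simpa [Pi.div_def] using this
  -- limit of (1+c)^M
  have limP : Tendsto (fun N:ℕ => (1 + 8*(N:ℝ)^(-β-δ))^(⌊(N:ℝ)^α⌋₊)) atTop (nhds 1) := by
    have hexp : Tendsto (fun N:ℕ => Real.exp (8*(N:ℝ)^(α-β-δ))) atTop (nhds 1) := by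
      have h0 : Tendsto (fun N:ℕ => 8*(N:ℝ)^(α-β-δ)) atTop (nhds 0) := by
        have h := (hneg (β+δ-α) (by linarith)).const_mul 8
        simp only [mul_zero] at h
        have heq : (fun N:ℕ => 8*(N:ℝ)^(α-β-δ)) = fun N:ℕ => 8*(N:ℝ)^(-(β+δ-α)) := by
          funext N; congr 2; ring
        rw [heq]; exact h
      have := (Real.continuous_exp.tendsto 0).comp h0
      simpa [Real.exp_zero, Function.comp_def] using this
    apply tendsto_of_tendsto_of_tendsto_of_le_of_le' tendsto_const_nhds hexp
    · filter_upwards [eventually_ge_atTop 1] with N hN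
      have ha0 : (0:ℝ) < N := by exact_mod_cast hN
      have : (0:ℝ) ≤ 8*(N:ℝ)^(-β-δ) := by positivity
      exact one_le_pow₀ (by linarith)
    · filter_upwards [eventually_ge_atTop 1] with N hN
      have ha0 : (0:ℝ) < N := by exact_mod_cast hN
      set c : ℝ := 8*(N:ℝ)^(-β-δ) with hc_def
      have hc0 : 0 ≤ c := by positivity
      set M : ℕ := ⌊(N:ℝ)^α⌋₊ with hM_def
      have hMa : (M:ℝ) ≤ (N:ℝ)^α := Nat.floor_le (Real.rpow_nonneg ha0.le α)
      calc (1+c)^M ≤ (Real.exp c)^M := by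
            apply pow_le_pow_left₀ (by linarith)
            linarith [Real.add_one_le_exp c]
        _ = Real.exp (M * c) := (Real.exp_nat_mul c M).symm
        _ ≤ Real.exp (8*(N:ℝ)^(α-β-δ)) := by
            apply Real.exp_le_exp.mpr
            have : (M:ℝ) * c ≤ (N:ℝ)^α * c :=
              mul_le_mul_of_nonneg_right hMa hc0
            have heq : (N:ℝ)^α * c = 8*(N:ℝ)^(α-β-δ) := by
              rw [hc_def, show α-β-δ = α + (-β-δ) by ring, Real.rpow_add ha0]
              ring
            linarith
  -- limit of upper bound
  have hx_lim : Tendsto (fun N:ℕ => (N:ℝ)^(α-1)) atTop (nhds 0) := by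
    have h := hneg (1-α) (by linarith)
    have heq : (fun N:ℕ => (N:ℝ)^(α-1)) = fun N:ℕ => (N:ℝ)^(-(1-α)) := by
      funext N; congr 1; ring
    rw [heq]; exact h
  have hden2 : Tendsto (fun N:ℕ => 1 - (N:ℝ)^(α-1)) atTop (nhds 1) := by
    have := tendsto_const_nhds (x := (1:ℝ)) (f := atTop (α := ℕ)) |>.sub hx_lim
    simpa using this
  have limU : Tendsto (fun N:ℕ =>
      ((⌊(N:ℝ)^α⌋₊:ℝ)/(N:ℝ)^α) * (1 + 8*(N:ℝ)^(-β-δ))^(⌊(N:ℝ)^α⌋₊) / (1 - (N:ℝ)^(α-1)))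
      atTop (nhds 1) := by
    have := (hfloor.mul limP).div hden2 (by norm_num)
    simpa [Pi.div_def] using this
  -- squeeze
  apply tendsto_of_tendsto_of_tendsto_of_le_of_le' limL limU
  · filter_upwards [eventually_ge_atTop 2,
      (hneg δ hδ0).eventually_le_const (by norm_num : (0:ℝ) < 1/2) |>.mono (fun N h => h),
      (hneg (1-α) (by linarith)).eventually_le_const (by norm_num : (0:ℝ) < 1/2) |>.mono
        (fun N h => h)] with N h2 hδe hxe
    have hx' : (N:ℝ)^(α-1) ≤ 1/2 := by
      rwa [show α - 1 = -(1-α) by ring]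
    exact (key β δ α hβ0 hδ0 hα0 hαd N h2 hδe hx').1
  · filter_upwards [eventually_ge_atTop 2,
      (hneg δ hδ0).eventually_le_const (by norm_num : (0:ℝ) < 1/2) |>.mono (fun N h => h),
      (hneg (1-α) (by linarith)).eventually_le_const (by norm_num : (0:ℝ) < 1/2) |>.mono
        (fun N h => h)] with N h2 hδe hxe
    have hx' : (N:ℝ)^(α-1) ≤ 1/2 := by
      rwa [show α - 1 = -(1-α) by ring]
    exact (key β δ α hβ0 hδ0 hα0 hαd N h2 hδe hx').2

end MullerRatchet3
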